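/- Let N, n, m, p, q ≥ 1, let A ∈ ℝ^{N×N}, B₀ ∈ ℝ^{N×m}, B̃ ∈ ℝ^{N×(mN)}, C ∈ ℝ^{q×N}, D ∈ ℝ^{q×m}, D̃ ∈ ℝ^{q×(mN)}, D_w ∈ ℝ^{q×p}, S_w ∈ ℝ^{p×q}; let P ∈ ℝ^{N×N} be symmetric positive definite, Q_w ∈ ℝ^{p×p} symmetric, R_w ∈ ℝ^{q×q} symmetric positive semidefinite, ρ ≥ 0, η ≥ 0, c_x > 0, c_u > 0; let K : ℝ^N → ℝ^{m×N}, τ : ℝ^N → (0,∞), λ : ℝ^N → (0,∞), B_w : ℝ^N → ℝ^{N×p} be functions, and for z ∈ ℝ^N set A_K(z) = A + B₀·K(z) + B̃·(K(z) ⊗ z) and C_K(z) = C + D·K(z) + D̃·(K(z) ⊗ z). Assume that for every z ∈ ℝ^N the symmetric matrix M(z) + E(z)ᵀ·Δ(z)·E(z) is negative semidefinite, where M(z) = [[P⁻¹A_K(z) + A_K(z)ᵀP⁻¹ + ρP⁻², P⁻¹, P⁻¹B_w(z) + (1/λ(z))C_K(z)ᵀS_wᵀ], [P⁻¹, −(1/τ(z))I_N,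 0], [B_w(z)ᵀP⁻¹ + (1/λ(z))S_wC_K(z), 0, (1/λ(z))(Q_w + S_wD_w + D_wᵀS_wᵀ) + (η/λ(z)²)I_p]], E(z) = [[I_N, 0, 0], [K(z), 0, 0], [C_K(z), 0, D_w]], and Δ(z) = blkdiag((2c_x²/τ(z))I_N, (2c_u²/τ(z))I_m, (1/λ(z))R_w). Let Φ̂ : ℝⁿ → ℝ^N, and let x : [0,∞) → ℝⁿ, w : [0,∞) → ℝ^p, r : [0,∞) → ℝ^N be such that t ↦ Φ̂(x(t)) is differentiable with derivative (d/dt)Φ̂(x(t)) = A_K(Φ̂(x(t)))·Φ̂(x(t)) + r(t) + B_w(Φ̂(x(t)))·w(t), and ‖r(t)‖ ≤ c_x‖Φ̂(x(t))‖ + c_u‖K(Φ̂(x(t)))·Φ̂(x(t))‖ for all t ≥ 0. Define y(t) = C_K(Φ̂(x(t)))·Φ̂(x(t)) + D_w·w(t). Then the function V(t) = Φ̂(x(t))ᵀP⁻¹Φ̂(x(t)) is differentiable and satisfies, for all t ≥ 0, V′(t) ≤ −ρ·Φ̂(x(t))ᵀP⁻²Φ̂(x(t)) − (η/λ(Φ̂(x(t)))²)·‖w(t)‖²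 − (1/λ(Φ̂(x(t))))·(w(t)ᵀQ_w w(t) + 2·w(t)ᵀS_w y(t) + y(t)ᵀR_w y(t)). -/

import Mathlib

open Matrix

/-- The Euclidean norm of a vector in `ℝ^k`. -/
noncomputable def eucNorm {k : ℕ} (v : Fin k → ℝ) : ℝ :=
  ‖(EuclideanSpace.equiv (Fin k) ℝ).symm v‖

/-- A real matrix is negative semidefinite if it is symmetric (Hermitian) and its
quadratic form is nonpositive. -/
def NegSemidef {k : Type*} [Fintype k] (M : Matrix k k ℝ) : Prop :=
  M.IsHermitian ∧ ∀ v : k → ℝ, v ⬝ᵥ M.mulVec v ≤ 0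

/-- The Kronecker product `M ⊗ z` of a matrix `M ∈ ℝ^{m×N}` with a column vector
`z ∈ ℝ^N`, yielding an `(mN) × N` matrix (rows indexed by `Fin m × Fin N`). -/
def kronMV {m N : ℕ} (M : Matrix (Fin m) (Fin N) ℝ) (z : Fin N → ℝ) :
    Matrix (Fin m × Fin N) (Fin N) ℝ :=
  Matrix.of fun p j => M p.1 j * z p.2

/-- A 3×3 block matrix with block row sizes `α`, `β`, `γ` and
block column sizes `α'`, `β'`, `γ'`. -/
def blk33 {α β γ α' β' γ' : Type*}
    (A11 : Matrix α α' ℝ) (A12 : Matrix α β' ℝ) (A13 : Matrix α γ' ℝ)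
    (A21 : Matrix β α' ℝ) (A22 : Matrix β β' ℝ) (A23 : Matrix β γ' ℝ)
    (A31 : Matrix γ α' ℝ) (A32 : Matrix γ β' ℝ) (A33 : Matrix γ γ' ℝ) :
    Matrix ((α ⊕ β) ⊕ γ) ((α' ⊕ β') ⊕ γ') ℝ :=
  Matrix.fromBlocks (Matrix.fromBlocks A11 A12 A21 A22) (Matrix.fromRows A13 A23)
    (Matrix.fromCols A31 A32) A33

lemma enorm_nonneg {k : ℕ} (v : Fin k → ℝ) : 0 ≤ eucNorm v := norm_nonneg _

lemma enorm_sq {k : ℕ} (v : Fin k → ℝ) : eucNorm v ^ 2 = v ⬝ᵥ v := by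
  rw [eucNorm, EuclideanSpace.norm_eq, Real.sq_sqrt (by positivity)]
  simp [dotProduct, sq]

lemma blk33_mulVec {α β γ α' β' γ' : Type*} [Fintype α'] [Fintype β'] [Fintype γ']
    (A11 : Matrix α α' ℝ) (A12 : Matrix α β' ℝ) (A13 : Matrix α γ' ℝ)
    (A21 : Matrix β α' ℝ) (A22 : Matrix β β' ℝ) (A23 : Matrix β γ' ℝ)
    (A31 : Matrix γ α' ℝ) (A32 : Matrix γ β' ℝ) (A33 : Matrix γ γ' ℝ)
    (a : α' → ℝ) (b : β' → ℝ) (c : γ' → ℝ) :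
    (blk33 A11 A12 A13 A21 A22 A23 A31 A32 A33).mulVec (Sum.elim (Sum.elim a b) c) =
      Sum.elim (Sum.elim (A11 *ᵥ a + A12 *ᵥ b + A13 *ᵥ c) (A21 *ᵥ a + A22 *ᵥ b + A23 *ᵥ c))
        (A31 *ᵥ a + A32 *ᵥ b + A33 *ᵥ c) := by
  simp [blk33, fromBlocks_mulVec, fromRows_mulVec, fromCols_mulVec_sumElim]
  funext i
  rcases i with (i|i)|i <;> simp

lemma blk33_quad {α β γ : Type*} [Fintype α] [Fintype β] [Fintype γ]
    (A11 : Matrix α α ℝ) (A12 : Matrix α β ℝ) (A13 : Matrix α γ ℝ)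
    (A21 : Matrix β α ℝ) (A22 : Matrix β β ℝ) (A23 : Matrix β γ ℝ)
    (A31 : Matrix γ α ℝ) (A32 : Matrix γ β ℝ) (A33 : Matrix γ γ ℝ)
    (a : α → ℝ) (b : β → ℝ) (c : γ → ℝ) :
    Sum.elim (Sum.elim a b) c ⬝ᵥ
      (blk33 A11 A12 A13 A21 A22 A23 A31 A32 A33).mulVec (Sum.elim (Sum.elim a b) c) =
      a ⬝ᵥ A11 *ᵥ a + a ⬝ᵥ A12 *ᵥ b + a ⬝ᵥ A13 *ᵥ c +
      (b ⬝ᵥ A21 *ᵥ a + b ⬝ᵥ A22 *ᵥ b + b ⬝ᵥ A23 *ᵥ c) +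
      (c ⬝ᵥ A31 *ᵥ a + c ⬝ᵥ A32 *ᵥ b + c ⬝ᵥ A33 *ᵥ c) := by
  rw [blk33_mulVec]
  simp [sumElim_dotProduct_sumElim, dotProduct_add]

lemma deriv_quad {N : ℕ} (M : Matrix (Fin N) (Fin N) ℝ) (f : ℝ → Fin N → ℝ)
    (v : Fin N → ℝ) (s : Set ℝ) (t : ℝ) (hf : HasDerivWithinAt f v s t) :
    HasDerivWithinAt (fun u => f u ⬝ᵥ M.mulVec (f u))
      (v ⬝ᵥ M.mulVec (f t) + f t ⬝ᵥ M.mulVec v) s t := by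
  have hcomp : ∀ i, HasDerivWithinAt (fun u => f u i) (v i) s t := fun i =>
    (hasDerivWithinAt_pi.mp hf) i
  have : HasDerivWithinAt (fun u => ∑ i, ∑ j, f u i * (M i j * f u j))
      (∑ i, ∑ j, (v i * (M i j * f t j) + f t i * (M i j * v j))) s t := by
    apply HasDerivWithinAt.fun_sum
    intro i _
    apply HasDerivWithinAt.fun_sum
    intro j _
    exact (hcomp i).mul ((hcomp j).const_mul (M i j))
  convert this using 2
  · simp [dotProduct, mulVec, Finset.mul_sum]
  · simp [dotProduct, mulVec, Finset.mul_sum, Finset.sum_add_distrib]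

lemma dp_tr {k l : Type*} [Fintype k] [Fintype l] (M : Matrix k l ℝ)
    (x : l → ℝ) (y : k → ℝ) : x ⬝ᵥ (Mᵀ *ᵥ y) = (M *ᵥ x) ⬝ᵥ y := by
  rw [dotProduct_mulVec, vecMul_transpose]

theorem stmt7 (N n m p q : ℕ) (hN : 1 ≤ N) (hn : 1 ≤ n) (hm : 1 ≤ m) (hp : 1 ≤ p)
    (hq : 1 ≤ q)
    (A : Matrix (Fin N) (Fin N) ℝ) (B0 : Matrix (Fin N) (Fin m) ℝ)
    (Bt : Matrix (Fin N) (Fin m × Fin N) ℝ)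
    (C : Matrix (Fin q) (Fin N) ℝ) (D : Matrix (Fin q) (Fin m) ℝ)
    (Dt : Matrix (Fin q) (Fin m × Fin N) ℝ)
    (Dw : Matrix (Fin q) (Fin p) ℝ) (Sw : Matrix (Fin p) (Fin q) ℝ)
    (P : Matrix (Fin N) (Fin N) ℝ) (hP : P.PosDef)
    (Qw : Matrix (Fin p) (Fin p) ℝ) (hQw : Qw.IsHermitian)
    (Rw : Matrix (Fin q) (Fin q) ℝ) (hRw : Rw.PosSemidef)
    (ρ η cx cu : ℝ) (hρ : 0 ≤ ρ) (hη : 0 ≤ η) (hcx : 0 < cx) (hcu : 0 < cu)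
    (K : (Fin N → ℝ) → Matrix (Fin m) (Fin N) ℝ)
    (τ lam : (Fin N → ℝ) → ℝ) (hτ : ∀ z, 0 < τ z) (hlam : ∀ z, 0 < lam z)
    (Bw : (Fin N → ℝ) → Matrix (Fin N) (Fin p) ℝ)
    (AK : (Fin N → ℝ) → Matrix (Fin N) (Fin N) ℝ)
    (hAK : ∀ z, AK z = A + B0 * K z + Bt * kronMV (K z) z)
    (CK : (Fin N → ℝ) → Matrix (Fin q) (Fin N) ℝ)
    (hCK : ∀ z, CK z = C + D * K z + Dt * kronMV (K z) z)
    (hLMI : ∀ z : Fin N → ℝ, NegSemidef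
      ((blk33
        (P⁻¹ * AK z + (AK z)ᵀ * P⁻¹ + ρ • (P⁻¹ * P⁻¹)) P⁻¹
          (P⁻¹ * Bw z + (1 / lam z) • ((CK z)ᵀ * Swᵀ))
        P⁻¹ ((-(1 / τ z)) • (1 : Matrix (Fin N) (Fin N) ℝ)) 0
        ((Bw z)ᵀ * P⁻¹ + (1 / lam z) • (Sw * CK z)) 0
          ((1 / lam z) • (Qw + Sw * Dw + Dwᵀ * Swᵀ) +
            (η / lam z ^ 2) • (1 : Matrix (Fin p) (Fin p) ℝ))) +
      (blk33
        (1 : Matrix (Fin N) (Fin N) ℝ) 0 0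
        (K z) 0 0
        (CK z) 0 Dw)ᵀ *
      (blk33
        ((2 * cx ^ 2 / τ z) • (1 : Matrix (Fin N) (Fin N) ℝ)) 0 0
        0 ((2 * cu ^ 2 / τ z) • (1 : Matrix (Fin m) (Fin m) ℝ)) 0
        0 0 ((1 / lam z) • Rw)) *
      (blk33
        (1 : Matrix (Fin N) (Fin N) ℝ) 0 0
        (K z) 0 0
        (CK z) 0 Dw)))
    (Φ : (Fin n → ℝ) → (Fin N → ℝ))
    (x : ℝ → Fin n → ℝ) (w : ℝ → Fin p → ℝ) (r : ℝ → Fin N → ℝ)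
    (hdyn : ∀ t : ℝ, 0 ≤ t → HasDerivWithinAt (fun s => Φ (x s))
      ((AK (Φ (x t))).mulVec (Φ (x t)) + r t + (Bw (Φ (x t))).mulVec (w t)) (Set.Ici 0) t)
    (hr : ∀ t : ℝ, 0 ≤ t →
      eucNorm (r t) ≤ cx * eucNorm (Φ (x t)) + cu * eucNorm ((K (Φ (x t))).mulVec (Φ (x t))))
    (y : ℝ → Fin q → ℝ)
    (hy : ∀ t, y t = (CK (Φ (x t))).mulVec (Φ (x t)) + Dw.mulVec (w t)) :
    ∀ t : ℝ, 0 ≤ t → ∃ d : ℝ,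
      HasDerivWithinAt (fun s => Φ (x s) ⬝ᵥ (P⁻¹).mulVec (Φ (x s))) d (Set.Ici 0) t ∧
      d ≤ -ρ * (Φ (x t) ⬝ᵥ (P⁻¹ * P⁻¹).mulVec (Φ (x t)))
            - (η / lam (Φ (x t)) ^ 2) * eucNorm (w t) ^ 2
            - (1 / lam (Φ (x t))) * (w t ⬝ᵥ Qw.mulVec (w t) + 2 * (w t ⬝ᵥ Sw.mulVec (y t))
                + y t ⬝ᵥ Rw.mulVec (y t)) := by
  intro t ht
  set z : Fin N → ℝ := Φ (x t) with hz
  set b : Fin N → ℝ := r t with hb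
  set c : Fin p → ℝ := w t with hc
  set v : Fin N → ℝ := AK z *ᵥ z + b + Bw z *ᵥ c with hv
  refine ⟨v ⬝ᵥ P⁻¹ *ᵥ z + z ⬝ᵥ P⁻¹ *ᵥ v, deriv_quad P⁻¹ (fun s => Φ (x s)) v _ t (hdyn t ht), ?_⟩
  -- symmetry of P⁻¹
  have hPt : Pᵀ = P := by
    ext i j
    have := congrFun (congrFun hP.1.eq i) j
    simpa [Matrix.conjTranspose_apply] using this
  have hPinv : (P⁻¹)ᵀ = P⁻¹ := by rw [Matrix.transpose_nonsing_inv, hPt]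
  have hsym : ∀ (u u' : Fin N → ℝ), u ⬝ᵥ P⁻¹ *ᵥ u' = u' ⬝ᵥ P⁻¹ *ᵥ u := by
    intro u u'
    rw [← hPinv, dp_tr, dotProduct_comm, hPinv]
  -- apply LMI
  have hq0 := (hLMI z).2 (Sum.elim (Sum.elim z b) c)
  rw [Matrix.add_mulVec, dotProduct_add, blk33_quad] at hq0
  -- E * xi
  have hEx : (blk33 (1 : Matrix (Fin N) (Fin N) ℝ) 0 0 (K z) 0 0 (CK z) 0 Dw) *ᵥ
      (Sum.elim (Sum.elim z b) c) =
      Sum.elim (Sum.elim z (K z *ᵥ z)) (CK z *ᵥ z + Dw *ᵥ c) := by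
    rw [blk33_mulVec]; simp
  have h2 : Sum.elim (Sum.elim z b) c ⬝ᵥ
      ((blk33 (1 : Matrix (Fin N) (Fin N) ℝ) 0 0 (K z) 0 0 (CK z) 0 Dw)ᵀ *
       (blk33 ((2 * cx ^ 2 / τ z) • (1 : Matrix (Fin N) (Fin N) ℝ)) 0 0
          0 ((2 * cu ^ 2 / τ z) • (1 : Matrix (Fin m) (Fin m) ℝ)) 0
          0 0 ((1 / lam z) • Rw)) *
       (blk33 (1 : Matrix (Fin N) (Fin N) ℝ) 0 0 (K z) 0 0 (CK z) 0 Dw)) *ᵥ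
       Sum.elim (Sum.elim z b) c =
      (2 * cx ^ 2 / τ z) * (z ⬝ᵥ z) + (2 * cu ^ 2 / τ z) * ((K z *ᵥ z) ⬝ᵥ (K z *ᵥ z)) +
      (1 / lam z) * ((CK z *ᵥ z + Dw *ᵥ c) ⬝ᵥ Rw *ᵥ (CK z *ᵥ z + Dw *ᵥ c)) := by
    rw [Matrix.mul_assoc, ← mulVec_mulVec, ← mulVec_mulVec, dotProduct_mulVec,
      vecMul_transpose, hEx, blk33_mulVec]
    simp [smul_mulVec, sumElim_dotProduct_sumElim, dotProduct_smul, smul_eq_mul]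
  rw [h2] at hq0
  -- expand matrix algebra into dot products
  simp only [Matrix.add_mulVec, Matrix.smul_mulVec, ← Matrix.mulVec_mulVec,
    dotProduct_add, dotProduct_smul, smul_eq_mul, Matrix.zero_mulVec, dotProduct_zero,
    Matrix.one_mulVec, dp_tr, hy, Matrix.mulVec_add, add_dotProduct] at hq0 ⊢
  -- residual bound
  have hslack : (τ z)⁻¹ * (2 * cx ^ 2 * (z ⬝ᵥ z) + 2 * cu ^ 2 * ((K z *ᵥ z) ⬝ᵥ (K z *ᵥ z))
      - b ⬝ᵥ b) ≥ 0 := by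
    have h := hr t ht
    have h1 := enorm_nonneg z
    have h2' := enorm_nonneg (K z *ᵥ z)
    have h3 := enorm_nonneg b
    have hbb : b ⬝ᵥ b ≤ 2 * cx ^ 2 * (z ⬝ᵥ z) + 2 * cu ^ 2 * ((K z *ᵥ z) ⬝ᵥ (K z *ᵥ z)) := by
      rw [← enorm_sq, ← enorm_sq, ← enorm_sq]
      nlinarith [sq_nonneg (cx * eucNorm z - cu * eucNorm (K z *ᵥ z))]
    have := inv_pos.mpr (hτ z)
    nlinarith
  rw [enorm_sq]
  simp only [hv, Matrix.mulVec_add, dotProduct_add, add_dotProduct, ← hz, ← hc]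
  -- symmetry rewrites
  have e1 := hsym (AK z *ᵥ z) z
  have e2 := hsym b z
  have e3 := hsym (Bw z *ᵥ c) z
  have e4 : (Sw *ᵥ (CK z *ᵥ z)) ⬝ᵥ c = c ⬝ᵥ Sw *ᵥ (CK z *ᵥ z) := dotProduct_comm _ _
  have e5 : (Sw *ᵥ (Dw *ᵥ c)) ⬝ᵥ c = c ⬝ᵥ Sw *ᵥ (Dw *ᵥ c) := dotProduct_comm _ _
  simp only [e1, e2, e3, e4, e5] at hq0 ⊢
  ring_nf at hq0 ⊢
  linarith [hq0, hslack]
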